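/- For every k ≥ 2, every γ ∈ (0,1], and every h ∈ Δ_k: if Π(h/γ) = e_j for some index j ∈ {1,…,k} (i.e., the projection places all mass on a single label), then for every index i ≠ j, it holds that h_i ≤ (1 − γ)/2. -/

import Mathlib

open scoped BigOperators

/-- The probability simplex in `ℝ^k`. -/
def simplex (k : ℕ) : Set (EuclideanSpace ℝ (Fin k)) :=
  {p | (∀ i, 0 ≤ p i) ∧ ∑ i, p i = 1}

/-- `q` is the Euclidean (L2) metric projection of `x` onto the probability simplex. -/
def IsL2ProjOnSimplex (k : ℕ) (x q : EuclideanSpace ℝ (Fin k)) : Prop :=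
  q ∈ simplex k ∧ ∀ r ∈ simplex k, ‖q - x‖ ≤ ‖r - x‖

/-- for `k ≥ 2`, `γ ∈ (0,1]`, `h ∈ Δ_k`: if `Π(h/γ) = e_j` for some `j`,
then every index `i ≠ j` satisfies `h i ≤ (1 − γ)/2`. -/
theorem stmt_12 (k : ℕ) (hk : 2 ≤ k) (γ : ℝ) (hγ : γ ∈ Set.Ioc (0 : ℝ) 1)
    (h : EuclideanSpace ℝ (Fin k)) (hh : h ∈ simplex k) (j : Fin k)
    (hq : IsL2ProjOnSimplex k (γ⁻¹ • h) (EuclideanSpace.single j (1 : ℝ))) :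
    ∀ i, i ≠ j → h i ≤ (1 - γ) / 2 := by
  intro i hij
  obtain ⟨hγ0, hγ1⟩ := hγ
  obtain ⟨hh1, hh2⟩ := hh
  obtain ⟨-, hmin⟩ := hq
  set x : EuclideanSpace ℝ (Fin k) := γ⁻¹ • h with hx
  set q : EuclideanSpace ℝ (Fin k) := EuclideanSpace.single j (1 : ℝ) with hqdef
  set v : EuclideanSpace ℝ (Fin k) :=
    EuclideanSpace.single i (1 : ℝ) - EuclideanSpace.single j (1 : ℝ) with hvdef
  have hqm : ∀ m, q m = if m = j then (1:ℝ) else 0 := by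
    intro m; simp [hqdef, EuclideanSpace.single_apply]
  have hvm : ∀ m, v m = (if m = i then (1:ℝ) else 0) - (if m = j then (1:ℝ) else 0) := by
    intro m; simp [hvdef, EuclideanSpace.single_apply]
  have hvmem : ∀ t : ℝ, 0 ≤ t → t ≤ 1 → q + t • v ∈ simplex k := by
    intro t ht0 ht1
    constructor
    · intro m
      have : (q + t • v) m = q m + t * v m := rfl
      rw [this, hqm, hvm]
      split_ifs <;> simp_all <;> nlinarith
    · have : ∀ m, (q + t • v) m = q m + t * v m := fun m => rfl
      simp only [this, hqm, hvm]
      rw [Finset.sum_add_distrib, ← Finset.mul_sum]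
      rw [Finset.sum_sub_distrib]
      simp [Finset.sum_ite_eq']
  have hvnorm : ‖v‖ ^ 2 = 2 := by
    rw [EuclideanSpace.norm_eq, Real.sq_sqrt (by positivity)]
    simp only [Real.norm_eq_abs, sq_abs]
    have : ∀ m, v m ^ 2 = (if m = i then (1:ℝ) else 0) + (if m = j then (1:ℝ) else 0) := by
      intro m
      rw [hvm]
      by_cases hmi : m = i <;> by_cases hmj : m = j <;>
        simp_all [hij] <;> ring
    simp only [this]
    rw [Finset.sum_add_distrib]
    simp [Finset.sum_ite_eq']
    norm_num
  have key : ∀ t : ℝ, 0 < t → t ≤ 1 → 0 ≤ (inner ℝ (q - x) v : ℝ) + t := by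
    intro t ht0 ht1
    have h1 := hmin _ (hvmem t ht0.le ht1)
    have heq : q + t • v - x = (q - x) + t • v := by abel
    rw [heq] at h1
    have h2 : ‖q - x‖ ^ 2 ≤ ‖(q - x) + t • v‖ ^ 2 := by
      have := norm_nonneg (q - x)
      nlinarith [norm_nonneg ((q - x) + t • v)]
    rw [norm_add_sq_real] at h2
    have h3 : (inner ℝ (q - x) (t • v) : ℝ) = t * inner ℝ (q - x) v :=
      real_inner_smul_right _ _ _
    have h4 : ‖t • v‖ ^ 2 = t ^ 2 * ‖v‖ ^ 2 := by
      rw [norm_smul, mul_pow]; simp [abs_of_pos ht0]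
    rw [h3, h4, hvnorm] at h2
    nlinarith
  have ha : (0 : ℝ) ≤ inner ℝ (q - x) v := by
    refine le_of_forall_pos_le_add ?_
    intro ε hε
    rcases le_or_gt ε 1 with hε1 | hε1
    · simpa using key ε hε hε1
    · have := key 1 one_pos le_rfl; linarith
  have hcomp : (inner ℝ (q - x) v : ℝ) = (q i - x i) - (q j - x j) := by
    rw [show (inner ℝ (q - x) v : ℝ) = ∑ m, (q m - x m) * v m from by
      simp [PiLp.inner_apply, RCLike.inner_apply, PiLp.sub_apply, conj_trivial, mul_comm]]
    have hterm : ∀ m, (q m - x m) * v m =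
        (q m - x m) * (if m = i then 1 else 0)
          - (q m - x m) * (if m = j then 1 else 0) := by
      intro m; rw [hvm]; ring
    simp only [hterm]
    rw [Finset.sum_sub_distrib]
    simp [mul_ite, Finset.sum_ite_eq']
  have hxi : x i = γ⁻¹ * h i := rfl
  have hxj : x j = γ⁻¹ * h j := rfl
  rw [hcomp, hxi, hxj, hqm i, hqm j] at ha
  simp [hij] at ha
  -- ha : 0 ≤ (0 - γ⁻¹ * h i) - (1 - γ⁻¹ * h j)
  have hsum2 : h i + h j ≤ 1 := by
    have hsub : ({i, j} : Finset (Fin k)) ⊆ Finset.univ := Finset.subset_univ _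
    have := Finset.sum_le_sum_of_subset_of_nonneg hsub (fun m _ _ => hh1 m)
    rw [Finset.sum_insert (by simp [hij]), Finset.sum_singleton, hh2] at this
    exact this
  have hgi : γ⁻¹ * (h j - h i) ≥ 1 := by nlinarith
  have : h j - h i ≥ γ := by
    have hγne : γ ≠ 0 := ne_of_gt hγ0
    calc h j - h i = γ * (γ⁻¹ * (h j - h i)) := by field_simp
    _ ≥ γ * 1 := by nlinarith
    _ = γ := mul_one γ
  linarith
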